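/- For every fair division instance with n agents, a finite set M of items, and monotone nondecreasing integer-valued valuations v_1, …, v_n with v_i(∅) = 0, there exists an EQx allocation, i.e., an allocation (A_1, …, A_n) such that for all agents i, j and every item g ∈ A_j, v_j(A_j \ {g}) ≤ v_i(A_i). -/

import Mathlib

/-- An allocation: pairwise disjoint bundles covering all the items. -/
def IsAllocation {ι : Type*} {n : ℕ} (A : Fin n → Finset ι) : Prop :=
  (∀ i j : Fin n, i ≠ j → Disjoint (A i) (A j)) ∧ ∀ x : ι, ∃ i : Fin n, x ∈ A i

private lemma eqx_pow_aux (a b c d : ℕ) (h1 : a < c) (h2 : b < c) :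
    3 ^ a + 3 ^ b < 3 ^ c + 3 ^ d := by
  have ha : (3:ℕ) ^ a ≤ 3 ^ (c - 1) := Nat.pow_le_pow_right (by norm_num) (by omega)
  have hb : (3:ℕ) ^ b ≤ 3 ^ (c - 1) := Nat.pow_le_pow_right (by norm_num) (by omega)
  have hc : (3:ℕ) ^ c = 3 ^ (c - 1) * 3 := by
    rw [← pow_succ]; congr 1; omega
  have hd : 0 < (3:ℕ) ^ d := Nat.pow_pos (by norm_num)
  omega

theorem eqx_exists_monotone_nondecreasing
    {ι : Type*} [Fintype ι] [DecidableEq ι] {n : ℕ} (hn : 0 < n)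
    (v : Fin n → Finset ι → ℤ)
    (hzero : ∀ i, v i ∅ = 0)
    (hmono : ∀ (i : Fin n) (S : Finset ι) (x : ι), v i S ≤ v i (insert x S)) :
    ∃ A : Fin n → Finset ι, IsAllocation A ∧
      ∀ i j : Fin n, ∀ g ∈ A j, v j ((A j).erase g) ≤ v i (A i) := by
  classical
  haveI : Nonempty (Fin n) := ⟨⟨0, hn⟩⟩
  -- monotonicity for subsets
  have mono : ∀ (i : Fin n) (S T : Finset ι), S ⊆ T → v i S ≤ v i T := by
    intro i S T hST
    have key : ∀ U : Finset ι, v i S ≤ v i (S ∪ U) := by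
      intro U
      induction U using Finset.induction_on with
      | empty => simp
      | insert x U hx ih =>
        refine le_trans ih ?_
        rw [Finset.union_insert]
        exact hmono i _ _
    have hT : T = S ∪ (T \ S) := (Finset.union_sdiff_of_subset hST).symm
    rw [hT]; exact key _
  set N : ℕ := Fintype.card ι with hN
  set B : ℤ := Finset.univ.sup' Finset.univ_nonempty (fun i => v i Finset.univ) with hB
  have hvB : ∀ (i : Fin n) (S : Finset ι), v i S ≤ B := by
    intro i S
    rw [hB]
    exact le_trans (mono i S Finset.univ (Finset.subset_univ S))
      (Finset.le_sup' (fun i => v i Finset.univ) (Finset.mem_univ i))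
  have hv0 : ∀ (i : Fin n) (S : Finset ι), 0 ≤ v i S := fun i S => by
    have := mono i ∅ S (Finset.empty_subset S)
    rwa [hzero] at this
  have hcardN : ∀ (S : Finset ι), S.card ≤ N := fun S => by
    rw [hN, ← Finset.card_univ]; exact Finset.card_le_card (Finset.subset_univ S)
  set y : (Fin n → Finset ι) → Fin n → ℕ :=
    fun A i => (B - v i (A i)).toNat * (N + 1) + (N - (A i).card) with hy
  set Φ : (Fin n → Finset ι) → ℕ := fun A => ∑ k, 3 ^ y A k with hΦ
  set s : Finset (Fin n → Finset ι) := Finset.univ.filter IsAllocation with hsdef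
  have hs : s.Nonempty := by
    refine ⟨fun k => if k = ⟨0, hn⟩ then Finset.univ else ∅, ?_⟩
    rw [hsdef, Finset.mem_filter]
    refine ⟨Finset.mem_univ _, ?_, ?_⟩
    · intro i j hij
      by_cases hi : i = ⟨0, hn⟩
      · have hj : ¬ j = ⟨0, hn⟩ := by rw [hi] at hij; exact fun h => hij h.symm
        simp [hi, hj]
      · simp [hi]
    · intro x
      exact ⟨⟨0, hn⟩, by simp⟩
  obtain ⟨A, hAs, hminΦ⟩ := Finset.exists_min_image s Φ hs
  have hA : IsAllocation A := (Finset.mem_filter.mp hAs).2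
  refine ⟨A, hA, ?_⟩
  by_contra hcon
  push_neg at hcon
  obtain ⟨i, j, g, hg, hij⟩ := hcon
  obtain ⟨i0, -, hi0⟩ := Finset.exists_max_image Finset.univ (y A)
    ⟨i, Finset.mem_univ i⟩
  -- from y A k ≤ y A i0 conclude v i0 (A i0) ≤ v k (A k)
  have ykey : ∀ k : Fin n, v i0 (A i0) ≤ v k (A k) := by
    intro k
    have hk := hi0 k (Finset.mem_univ k)
    rw [hy] at hk
    set a : ℕ := (B - v i0 (A i0)).toNat with hadef
    set b : ℕ := (B - v k (A k)).toNat with hbdef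
    have hca : (A i0).card ≤ N := hcardN _
    have hcb : (A k).card ≤ N := hcardN _
    have hba : b ≤ a := by
      by_contra hba
      push_neg at hba
      have h1 : (a + 1) * (N + 1) ≤ b * (N + 1) := Nat.mul_le_mul_right _ hba
      have h2 : N - (A k).card ≤ N := Nat.sub_le _ _
      have h3 : N - (A i0).card ≤ N := Nat.sub_le _ _
      nlinarith [hk]
    have ha' : ((a : ℤ)) = B - v i0 (A i0) := by
      rw [hadef, Int.toNat_of_nonneg (by linarith [hvB i0 (A i0)])]
    have hb' : ((b : ℤ)) = B - v k (A k) := by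
      rw [hbdef, Int.toNat_of_nonneg (by linarith [hvB k (A k)])]
    have : (b : ℤ) ≤ (a : ℤ) := by exact_mod_cast hba
    linarith [ha', hb']
  -- value facts
  have hgj : v j ((A j).erase g) ≤ v j (A j) := by
    have : (A j).erase g ⊆ A j := Finset.erase_subset _ _
    exact mono _ _ _ this
  have hlt : v i0 (A i0) < v j ((A j).erase g) := lt_of_le_of_lt (ykey i) hij
  have hji0 : j ≠ i0 := by
    intro h
    have h2 := lt_of_lt_of_le hlt hgj
    rw [h] at h2
    exact lt_irrefl _ h2
  have hgni0 : g ∉ A i0 := fun h =>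
    (Finset.disjoint_left.mp (hA.1 j i0 hji0) hg) h
  -- the improved allocation
  set A' : Fin n → Finset ι := fun k =>
    if k = i0 then insert g (A i0) else if k = j then (A j).erase g else A k with hA'def
  have hA'i0 : A' i0 = insert g (A i0) := by simp [hA'def]
  have hA'j : A' j = (A j).erase g := by simp [hA'def, hji0]
  have hA'other : ∀ k, k ≠ i0 → k ≠ j → A' k = A k := by
    intro k h1 h2; simp [hA'def, h1, h2]
  have hsub : ∀ k, k ≠ i0 → A' k ⊆ A k ∧ g ∉ A' k := by
    intro k hk
    by_cases hkj : k = j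
    · subst hkj
      rw [hA'j]
      exact ⟨Finset.erase_subset _ _, Finset.notMem_erase _ _⟩
    · rw [hA'other k hk hkj]
      exact ⟨Finset.Subset.refl _,
        fun h => (Finset.disjoint_left.mp (hA.1 j k (fun e => hkj e.symm)) hg) h⟩
  have hA'alloc : IsAllocation A' := by
    constructor
    · intro k l hkl
      by_cases hk : k = i0
      · subst hk
        have hl := hsub l (fun e => hkl e.symm)
        rw [hA'i0, Finset.disjoint_insert_left]
        exact ⟨hl.2, Finset.disjoint_of_subset_right hl.1 (hA.1 k l hkl)⟩
      · by_cases hl : l = i0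
        · subst hl
          have hk2 := hsub k hk
          rw [hA'i0, Finset.disjoint_insert_right]
          exact ⟨hk2.2, Finset.disjoint_of_subset_left hk2.1 (hA.1 k l hkl)⟩
        · exact Finset.disjoint_of_subset_left (hsub k hk).1
            (Finset.disjoint_of_subset_right (hsub l hl).1 (hA.1 k l hkl))
    · intro x
      obtain ⟨k, hk⟩ := hA.2 x
      by_cases hki : k = i0
      · exact ⟨i0, by rw [hA'i0]; exact Finset.mem_insert_of_mem (hki ▸ hk)⟩
      · by_cases hkj : k = j
        · by_cases hxg : x = g
          · exact ⟨i0, by rw [hA'i0, hxg]; exact Finset.mem_insert_self _ _⟩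
          · exact ⟨j, by rw [hA'j]; exact Finset.mem_erase.mpr ⟨hxg, hkj ▸ hk⟩⟩
        · exact ⟨k, by rw [hA'other k hki hkj]; exact hk⟩
  have hA's : A' ∈ s := by
    rw [hsdef, Finset.mem_filter]; exact ⟨Finset.mem_univ _, hA'alloc⟩
  -- key inequalities on y
  have hy1 : y A' i0 < y A i0 := by
    rw [hy]
    simp only [hA'i0]
    set a : ℕ := (B - v i0 (A i0)).toNat with hadef
    set a' : ℕ := (B - v i0 (insert g (A i0))).toNat with ha'def
    have hva : v i0 (A i0) ≤ v i0 (insert g (A i0)) := hmono _ _ _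
    have haa : a' ≤ a := by
      apply Int.toNat_le_toNat; linarith
    have hcard : (insert g (A i0)).card = (A i0).card + 1 :=
      Finset.card_insert_of_notMem hgni0
    have hcN : (insert g (A i0)).card ≤ N := hcardN _
    rw [hcard] at hcN ⊢
    rcases Nat.lt_or_ge a' a with h | h
    · have h1 : (a' + 1) * (N + 1) ≤ a * (N + 1) := Nat.mul_le_mul_right _ h
      have h2 : N - ((A i0).card + 1) ≤ N := Nat.sub_le _ _
      nlinarith
    · have : a' = a := le_antisymm haa h
      rw [this]
      have : N - ((A i0).card + 1) < N - (A i0).card := by omega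
      omega
  have hy2 : y A' j < y A i0 := by
    rw [hy]
    simp only [hA'j]
    set a : ℕ := (B - v i0 (A i0)).toNat with hadef
    set b' : ℕ := (B - v j ((A j).erase g)).toNat with hb'def
    have hb'a : b' < a := by
      have h0 : (0:ℤ) < B - v i0 (A i0) := by
        have := hvB j (A j); linarith
      rw [hadef, hb'def]
      exact (Int.toNat_lt_toNat h0).mpr (by linarith)
    have h1 : (b' + 1) * (N + 1) ≤ a * (N + 1) := Nat.mul_le_mul_right _ hb'a
    have h2 : N - ((A j).erase g).card ≤ N := Nat.sub_le _ _
    nlinarith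
  -- sum manipulation
  have hjmem : j ∈ Finset.univ.erase i0 := Finset.mem_erase.mpr ⟨hji0, Finset.mem_univ _⟩
  have hsplit : ∀ Ax : Fin n → Finset ι,
      Φ Ax = 3 ^ y Ax i0 + (3 ^ y Ax j + ∑ k ∈ (Finset.univ.erase i0).erase j, 3 ^ y Ax k) := by
    intro Ax
    show ∑ k, 3 ^ y Ax k = _
    rw [← Finset.add_sum_erase _ _ (Finset.mem_univ i0),
      ← Finset.add_sum_erase _ _ hjmem]
  have htails : ∑ k ∈ (Finset.univ.erase i0).erase j, 3 ^ y A' k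
      = ∑ k ∈ (Finset.univ.erase i0).erase j, 3 ^ y A k := by
    apply Finset.sum_congr rfl
    intro k hk
    rw [Finset.mem_erase, Finset.mem_erase] at hk
    rw [hy]
    simp only [hA'other k hk.2.1 hk.1]
  have hΦlt : Φ A' < Φ A := by
    rw [hsplit A', hsplit A, htails]
    have := eqx_pow_aux (y A' i0) (y A' j) (y A i0) (y A j) hy1 hy2
    omega
  exact absurd (hminΦ A' hA's) (not_le.mpr hΦlt)
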